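/- Let λ > 0, μ > 0, r > 0, γ > 0, and p_min ≤ R ≤ L < p_max. With x = (L − R)/(p_max − p_min), y = (p_max − L)/(p_max − p_min), w(T) = (1 − e^{−λTy}) ((p_max + L)/2) (λy/(λy + r)) + e^{−λTy} u(T, λx, μ, R, L, r) for T > 0, define the expected utility z(T) = e^{−γT} w(T) for T > 0 and z(0) = 0. Then z extends to a continuous function on [0, ∞) with z(T) → 0 as T → ∞, and consequently there exists T* ∈ [0, ∞) such that z(T*) ≥ z(T) for all T ≥ 0; i.e., the expected utility attains a global maximum, so an optimal waiting time exists. -/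

import Mathlib

open Real Filter

/-- `f(T,μ) = 1 − (1 − e^{−μT})/(μT)`. -/
noncomputable def fAux (T mu : ℝ) : ℝ := 1 - (1 - Real.exp (-mu * T)) / (mu * T)

/-- `g(T,λ,μ,r) = (1 − f) e^{−rT} e^{−λT}`. -/
noncomputable def gAux (T lam mu r : ℝ) : ℝ :=
  (1 - fAux T mu) * Real.exp (-r * T) * Real.exp (-lam * T)

/-- The closed-form expected discounted payoff `u(T, λ, μ, p_min, p_max, r)`
of the auxiliary sale model. -/
noncomputable def uAux (T lam mu pmin pmax r : ℝ) : ℝ :=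
  -gAux T lam mu r * (pmax - pmin) / (1 - fAux T mu) ^ 2
      * (fAux T mu * Real.exp (lam * T * fAux T mu)
          - (Real.exp (lam * T * fAux T mu) - 1) / (lam * T)
          - Real.exp (lam * T * fAux T mu)
          + (Real.exp (lam * T) - 1) / (lam * T))
    + pmax * gAux T lam mu r
        * (Real.exp (lam * T) - Real.exp (lam * T * fAux T mu)) / (1 - fAux T mu)

/-- The expected discounted payoff `w(T)` in the public list price model. -/
noncomputable def wAux (lam mu r pmin pmax R L : ℝ) (T : ℝ) : ℝ :=
  (1 - Real.exp (-(lam * T * ((pmax - L) / (pmax - pmin))))) * ((pmax + L) / 2)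
      * (lam * ((pmax - L) / (pmax - pmin))
          / (lam * ((pmax - L) / (pmax - pmin)) + r))
    + Real.exp (-(lam * T * ((pmax - L) / (pmax - pmin))))
        * uAux T (lam * ((L - R) / (pmax - pmin))) mu R L r

private lemma tendsto_aux_phi :
    Tendsto (fun b : ℝ => (1 - Real.exp (-b)) / b) (nhdsWithin 0 (Set.Ioi 0)) (nhds 1) := by
  have h : HasDerivAt (fun b : ℝ => 1 - Real.exp (-b)) 1 0 := by
    have h1 : HasDerivAt (fun b : ℝ => Real.exp (-b)) (-1) 0 := by
      simpa [Function.comp_def] using (Real.hasDerivAt_exp (-0)).comp 0 (hasDerivAt_neg (0:ℝ))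
    simpa [Pi.sub_def] using (hasDerivAt_const (0:ℝ) (1:ℝ)).sub h1
  have ht := hasDerivAt_iff_tendsto_slope.mp h
  have hmono : nhdsWithin (0:ℝ) (Set.Ioi 0) ≤ nhdsWithin 0 ({0}ᶜ) :=
    nhdsWithin_mono 0 (fun b hb => ne_of_gt hb)
  refine (ht.mono_left hmono).congr ?_
  intro b
  simp [slope_def_field]

private lemma exp_neg_tendsto_top {f : ℝ → ℝ} (hf : Tendsto f atTop atTop) :
    Tendsto (fun T => Real.exp (-(f T))) atTop (nhds 0) :=
  Real.tendsto_exp_atBot.comp (tendsto_neg_atTop_atBot.comp hf)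

private lemma mul_tendsto_top (k y : ℝ) (hk : 0 < k) (hy : 0 < y) :
    Tendsto (fun T : ℝ => k * T * y) atTop atTop :=
  (tendsto_id.const_mul_atTop hk).atTop_mul_const hy

private noncomputable def Uaux (lam' mu r R L : ℝ) (T : ℝ) : ℝ :=
  Real.exp (-r * T) *
    ((L - R) * Real.exp (-(lam' * ((1 - Real.exp (-mu * T)) / mu)))
      - (L - R) * (1 - Real.exp (-(lam' * ((1 - Real.exp (-mu * T)) / mu))))
          / (lam' * ((1 - Real.exp (-mu * T)) / mu))
      + L * (1 - Real.exp (-(lam' * ((1 - Real.exp (-mu * T)) / mu)))))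

private noncomputable def Faux (gamma lam y pmax L r : ℝ) (u : ℝ → ℝ) (T : ℝ) : ℝ :=
  Real.exp (-gamma * T) *
    ((1 - Real.exp (-(lam * T * y))) * ((pmax + L) / 2) * (lam * y / (lam * y + r))
      + Real.exp (-(lam * T * y)) * u T)

private lemma Faux_tendsto (gamma lam y pmax L r : ℝ) (u : ℝ → ℝ) (l : Filter ℝ)
    (e1 e2 uL : ℝ)
    (h1 : Tendsto (fun T => Real.exp (-gamma * T)) l (nhds e1))
    (h2 : Tendsto (fun T => Real.exp (-(lam * T * y))) l (nhds e2))
    (hu : Tendsto u l (nhds uL)) :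
    Tendsto (Faux gamma lam y pmax L r u) l
      (nhds (e1 * ((1 - e2) * ((pmax + L) / 2) * (lam * y / (lam * y + r)) + e2 * uL))) := by
  unfold Faux
  exact h1.mul ((((tendsto_const_nhds.sub h2).mul_const _).mul_const _).add (h2.mul hu))

private lemma Faux_continuousOn (gamma lam y pmax L r : ℝ) {u : ℝ → ℝ} {s : Set ℝ}
    (hu : ContinuousOn u s) : ContinuousOn (Faux gamma lam y pmax L r u) s := by
  unfold Faux
  apply ContinuousOn.mul (Continuous.continuousOn (by fun_prop))
  exact (Continuous.continuousOn (by fun_prop)).add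
    ((Continuous.continuousOn (by fun_prop)).mul hu)

private lemma aux_a_cont (lam' mu : ℝ) :
    Continuous (fun T : ℝ => lam' * ((1 - Real.exp (-mu * T)) / mu)) := by fun_prop

private lemma aux_a_pos (lam' mu : ℝ) (hmu : 0 < mu) (hlam' : 0 < lam') :
    ∀ T ∈ Set.Ioi (0:ℝ), 0 < lam' * ((1 - Real.exp (-mu * T)) / mu) := by
  intro T hT
  have hT' : (0:ℝ) < T := hT
  have hE : Real.exp (-mu * T) < 1 := by
    rw [Real.exp_lt_one_iff]; nlinarith
  exact mul_pos hlam' (div_pos (by linarith) hmu)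

private lemma Uaux_continuousOn (lam' mu r R L : ℝ) (hmu : 0 < mu) (hlam' : 0 < lam') :
    ContinuousOn (Uaux lam' mu r R L) (Set.Ioi 0) := by
  have hane : ∀ T ∈ Set.Ioi (0:ℝ), lam' * ((1 - Real.exp (-mu * T)) / mu) ≠ 0 :=
    fun T hT => (aux_a_pos lam' mu hmu hlam' T hT).ne'
  unfold Uaux
  apply ContinuousOn.mul (Continuous.continuousOn (by fun_prop))
  refine ContinuousOn.add (ContinuousOn.sub (Continuous.continuousOn (by fun_prop)) ?_)
    (Continuous.continuousOn (by fun_prop))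
  exact (Continuous.continuousOn (by fun_prop)).div
    (aux_a_cont lam' mu).continuousOn hane

private lemma Uaux_tendsto_zero (lam' mu r R L : ℝ) (hmu : 0 < mu) (hlam' : 0 < lam') :
    Tendsto (Uaux lam' mu r R L) (nhdsWithin 0 (Set.Ioi 0)) (nhds 0) := by
  set a : ℝ → ℝ := fun T => lam' * ((1 - Real.exp (-mu * T)) / mu) with ha_def
  have ha0 : Tendsto a (nhdsWithin 0 (Set.Ioi 0)) (nhdsWithin 0 (Set.Ioi 0)) := by
    rw [tendsto_nhdsWithin_iff]
    constructor
    · have := ((aux_a_cont lam' mu).tendsto 0).mono_left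
        (nhdsWithin_le_nhds (s := Set.Ioi (0:ℝ)))
      simpa [ha_def] using this
    · exact eventually_mem_nhdsWithin.mono (fun T hT => aux_a_pos lam' mu hmu hlam' T hT)
  have hphi : Tendsto (fun T => (1 - Real.exp (-(a T))) / (a T))
      (nhdsWithin 0 (Set.Ioi 0)) (nhds 1) := tendsto_aux_phi.comp ha0
  have hexpa : Tendsto (fun T => Real.exp (-(a T))) (nhdsWithin 0 (Set.Ioi 0)) (nhds 1) := by
    have := ((Real.continuous_exp.comp (aux_a_cont lam' mu).neg).tendsto 0).mono_left
      (nhdsWithin_le_nhds (s := Set.Ioi (0:ℝ)))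
    simpa [ha_def, Function.comp_def, Pi.neg_def] using this
  have hre : Tendsto (fun T : ℝ => Real.exp (-r * T)) (nhdsWithin 0 (Set.Ioi 0)) (nhds 1) := by
    have : Continuous (fun T : ℝ => Real.exp (-r * T)) := by fun_prop
    have := (this.tendsto 0).mono_left (nhdsWithin_le_nhds (s := Set.Ioi (0:ℝ)))
    simpa using this
  have hmain : Tendsto (Uaux lam' mu r R L) (nhdsWithin 0 (Set.Ioi 0))
      (nhds (1 * ((L - R) * 1 - (L - R) * 1 + L * (1 - 1)))) := by
    unfold Uaux
    refine hre.mul (Tendsto.add (Tendsto.sub (tendsto_const_nhds.mul hexpa) ?_)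
      (tendsto_const_nhds.mul (tendsto_const_nhds.sub hexpa)))
    have := (tendsto_const_nhds (x := L - R)).mul hphi
    -- (L-R) * ((1 - exp(-(a T)))/(a T)) vs ((L-R) * (1 - exp(-(a T))))/(a T)
    refine Tendsto.congr (fun T => ?_) (by simpa using this)
    rw [mul_div_assoc]
  simpa using hmain

private lemma Uaux_tendsto_atTop (lam' mu r R L : ℝ) (hmu : 0 < mu) (hlam' : 0 < lam')
    (hrr : 0 < r) :
    Tendsto (Uaux lam' mu r R L) atTop (nhds 0) := by
  set a : ℝ → ℝ := fun T => lam' * ((1 - Real.exp (-mu * T)) / mu) with ha_def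
  have hexpmu : Tendsto (fun T : ℝ => Real.exp (-mu * T)) atTop (nhds 0) := by
    refine Tendsto.congr (fun T => ?_) (exp_neg_tendsto_top (tendsto_id.const_mul_atTop hmu))
    simp
  have haTop : Tendsto a atTop (nhds (lam' * ((1 - 0) / mu))) :=
    tendsto_const_nhds.mul ((tendsto_const_nhds.sub hexpmu).div_const mu)
  have haInf : (0:ℝ) < lam' * ((1 - 0) / mu) := by
    apply mul_pos hlam'; rw [sub_zero]; exact div_pos one_pos hmu
  have hexpa : Tendsto (fun T => Real.exp (-(a T))) atTop
      (nhds (Real.exp (-(lam' * ((1 - 0) / mu))))) :=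
    (Real.continuous_exp.tendsto _).comp haTop.neg
  have hphi : Tendsto (fun T => (1 - Real.exp (-(a T))) / (a T)) atTop
      (nhds ((1 - Real.exp (-(lam' * ((1 - 0) / mu)))) / (lam' * ((1 - 0) / mu)))) :=
    (tendsto_const_nhds.sub hexpa).div haTop haInf.ne'
  have hre : Tendsto (fun T : ℝ => Real.exp (-r * T)) atTop (nhds 0) := by
    refine Tendsto.congr (fun T => ?_) (exp_neg_tendsto_top (tendsto_id.const_mul_atTop hrr))
    simp
  have hphi2 : Tendsto (fun T => (L - R) * (1 - Real.exp (-(a T))) / (a T)) atTop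
      (nhds ((L - R) * ((1 - Real.exp (-(lam' * ((1 - 0) / mu)))) / (lam' * ((1 - 0) / mu))))) := by
    have h := (tendsto_const_nhds (x := L - R)).mul hphi
    exact h.congr (fun T => (mul_div_assoc _ _ _).symm)
  have hmain : Tendsto (Uaux lam' mu r R L) atTop
      (nhds (0 * ((L - R) * Real.exp (-(lam' * ((1 - 0) / mu)))
        - (L - R) * ((1 - Real.exp (-(lam' * ((1 - 0) / mu)))) / (lam' * ((1 - 0) / mu)))
        + L * (1 - Real.exp (-(lam' * ((1 - 0) / mu))))))) := by
    unfold Uaux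
    exact hre.mul (Tendsto.add (Tendsto.sub (tendsto_const_nhds.mul hexpa) hphi2)
      (tendsto_const_nhds.mul (tendsto_const_nhds.sub hexpa)))
  simpa using hmain

private lemma exists_max_aux (z : ℝ → ℝ) (hc : ContinuousOn z (Set.Ici 0))
    (ht : Tendsto z atTop (nhds 0)) (hz0 : z 0 = 0) :
    ∃ Tstar : ℝ, 0 ≤ Tstar ∧ ∀ T : ℝ, 0 ≤ T → z T ≤ z Tstar := by
  by_cases hpos : ∃ T0 : ℝ, 0 ≤ T0 ∧ 0 < z T0
  · obtain ⟨T0, hT00, hzT0⟩ := hpos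
    have hev : ∀ᶠ T in atTop, z T < z T0 := ht.eventually_lt_const hzT0
    obtain ⟨M, hM⟩ := eventually_atTop.mp hev
    set K := max M T0 with hK
    have hK0 : (0:ℝ) ≤ K := le_trans hT00 (le_max_right _ _)
    obtain ⟨Tstar, hTs, hmax⟩ := (isCompact_Icc (a := (0:ℝ)) (b := K)).exists_isMaxOn
      ⟨0, Set.left_mem_Icc.mpr hK0⟩ (hc.mono (Set.Icc_subset_Ici_self))
    refine ⟨Tstar, hTs.1, fun T hT => ?_⟩
    by_cases hTK : T ≤ K
    · exact hmax ⟨hT, hTK⟩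
    · have h1 : z T < z T0 := hM T (le_trans (le_max_left _ _) (le_of_not_ge hTK))
      have h2 : z T0 ≤ z Tstar := hmax ⟨hT00, le_max_right _ _⟩
      linarith
  · push_neg at hpos
    exact ⟨0, le_refl 0, fun T hT => by rw [hz0]; exact hpos T hT⟩

private lemma uAux_eq (T lam mu R L r : ℝ) (hT : 0 < T) (hmu : 0 < mu) (hlam : 0 < lam) :
    uAux T lam mu R L r
      = Real.exp (-r * T) *
          ((L - R) * Real.exp (-(lam * ((1 - Real.exp (-mu * T)) / mu)))
            - (L - R) * (1 - Real.exp (-(lam * ((1 - Real.exp (-mu * T)) / mu))))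
                / (lam * ((1 - Real.exp (-mu * T)) / mu))
            + L * (1 - Real.exp (-(lam * ((1 - Real.exp (-mu * T)) / mu))))) := by
  have hT' : T ≠ 0 := hT.ne'
  have hmu' : mu ≠ 0 := hmu.ne'
  have hlam' : lam ≠ 0 := hlam.ne'
  set s : ℝ := (1 - Real.exp (-mu * T)) / mu with hs
  have hE : Real.exp (-mu * T) < 1 := by
    rw [Real.exp_lt_one_iff]; nlinarith
  have hs0 : 0 < s := div_pos (by linarith) hmu
  have hs' : s ≠ 0 := hs0.ne'
  have hf : fAux T mu = 1 - s / T := by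
    rw [fAux, hs]; field_simp
  have hTf : lam * T * fAux T mu = lam * T - lam * s := by
    rw [hf]; field_simp
  have hexp : Real.exp (lam * T * fAux T mu)
      = Real.exp (lam * T) * Real.exp (-(lam * s)) := by
    rw [hTf, ← Real.exp_add]; ring_nf
  have hA : Real.exp (-lam * T) = (Real.exp (lam * T))⁻¹ := by
    rw [← Real.exp_neg]; ring_nf
  have hAne : Real.exp (lam * T) ≠ 0 := (Real.exp_pos _).ne'
  rw [uAux, gAux, hexp, hf, hA]
  have hsub : (1:ℝ) - (1 - s / T) = s / T := by ring
  rw [hsub]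
  field_simp
  ring

/-- The expected utility `z(T) = e^{−γT} w(T)` (with `z(0) = 0`) is continuous on
`[0, ∞)`, tends to `0` at infinity, and hence attains a global maximum: an optimal
waiting time exists. -/
theorem optimal_waiting_time_exists
    (lam mu r gamma pmin pmax R L : ℝ)
    (hlam : 0 < lam) (hmu : 0 < mu) (hr : 0 < r) (hgamma : 0 < gamma)
    (h1 : pmin ≤ R) (h2 : R ≤ L) (h3 : L < pmax)
    (z : ℝ → ℝ)
    (hz : ∀ T : ℝ, 0 < T → z T = Real.exp (-gamma * T) * wAux lam mu r pmin pmax R L T)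
    (hz0 : z 0 = 0) :
    ContinuousOn z (Set.Ici 0) ∧ Tendsto z atTop (nhds 0) ∧
      ∃ Tstar : ℝ, 0 ≤ Tstar ∧ ∀ T : ℝ, 0 ≤ T → z T ≤ z Tstar := by
  have hpp : (0:ℝ) < pmax - pmin := by linarith
  have hy : 0 < (pmax - L) / (pmax - pmin) := div_pos (by linarith) hpp
  have he1top : Tendsto (fun T : ℝ => Real.exp (-gamma * T)) atTop (nhds 0) := by
    refine Tendsto.congr (fun T => ?_)
      (exp_neg_tendsto_top (tendsto_id.const_mul_atTop hgamma))
    simp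
  have he2top : Tendsto
      (fun T : ℝ => Real.exp (-(lam * T * ((pmax - L) / (pmax - pmin))))) atTop (nhds 0) :=
    exp_neg_tendsto_top (mul_tendsto_top lam _ hlam hy)
  have he1zero : Tendsto (fun T : ℝ => Real.exp (-gamma * T))
      (nhdsWithin 0 (Set.Ioi 0)) (nhds 1) := by
    have h : Continuous (fun T : ℝ => Real.exp (-gamma * T)) := by fun_prop
    have := (h.tendsto 0).mono_left (nhdsWithin_le_nhds (s := Set.Ioi (0:ℝ)))
    simpa using this
  have he2zero : Tendsto
      (fun T : ℝ => Real.exp (-(lam * T * ((pmax - L) / (pmax - pmin)))))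
      (nhdsWithin 0 (Set.Ioi 0)) (nhds 1) := by
    have h : Continuous
        (fun T : ℝ => Real.exp (-(lam * T * ((pmax - L) / (pmax - pmin))))) := by fun_prop
    have := (h.tendsto 0).mono_left (nhdsWithin_le_nhds (s := Set.Ioi (0:ℝ)))
    simpa using this
  rcases eq_or_lt_of_le h2 with hRL | hRL
  · -- case R = L
    have hu0 : ∀ T : ℝ, uAux T (lam * ((L - R) / (pmax - pmin))) mu R L r = 0 := by
      intro T
      have h0 : lam * ((L - R) / (pmax - pmin)) = 0 := by rw [← hRL]; simp
      rw [h0, ← hRL]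
      simp [uAux, gAux]
    have hzF : ∀ T : ℝ, 0 < T →
        z T = Faux gamma lam ((pmax - L) / (pmax - pmin)) pmax L r (fun _ => 0) T := by
      intro T hT
      rw [hz T hT, wAux, hu0 T]
      simp [Faux]
    have hEq : Set.EqOn z
        (Faux gamma lam ((pmax - L) / (pmax - pmin)) pmax L r (fun _ => 0)) (Set.Ici 0) := by
      intro T hT
      rcases eq_or_lt_of_le (Set.mem_Ici.mp hT) with h | h
      · rw [← h, hz0]; simp [Faux]
      · exact hzF T h
    have hcont : ContinuousOn z (Set.Ici 0) :=
      (Faux_continuousOn gamma lam _ pmax L r continuousOn_const).congr hEq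
    have htop : Tendsto z atTop (nhds 0) := by
      have hev : (Faux gamma lam ((pmax - L) / (pmax - pmin)) pmax L r (fun _ => 0))
          =ᶠ[atTop] z := (eventually_gt_atTop 0).mono fun T hT => (hzF T hT).symm
      have hFt := Faux_tendsto gamma lam ((pmax - L) / (pmax - pmin)) pmax L r
        (fun _ => 0) atTop 0 0 0 he1top he2top tendsto_const_nhds
      exact Tendsto.congr' hev (by simpa using hFt)
    exact ⟨hcont, htop, exists_max_aux z hcont htop hz0⟩
  · -- case R < L
    have hlam' : 0 < lam * ((L - R) / (pmax - pmin)) :=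
      mul_pos hlam (div_pos (by linarith) hpp)
    have hzF : ∀ T : ℝ, 0 < T →
        z T = Faux gamma lam ((pmax - L) / (pmax - pmin)) pmax L r
          (Uaux (lam * ((L - R) / (pmax - pmin))) mu r R L) T := by
      intro T hT
      rw [hz T hT, wAux, uAux_eq T _ mu R L r hT hmu hlam']
      rfl
    have hFcont : ContinuousOn (Faux gamma lam ((pmax - L) / (pmax - pmin)) pmax L r
        (Uaux (lam * ((L - R) / (pmax - pmin))) mu r R L)) (Set.Ioi 0) :=
      Faux_continuousOn _ _ _ _ _ _ (Uaux_continuousOn _ mu r R L hmu hlam')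
    have hcont : ContinuousOn z (Set.Ici 0) := by
      intro t ht
      rcases eq_or_lt_of_le (Set.mem_Ici.mp ht) with h | h
      · rw [← h]
        show Tendsto z (nhdsWithin 0 (Set.Ici 0)) (nhds (z 0))
        rw [hz0, ← Set.Ioi_insert, nhdsWithin_insert, tendsto_sup]
        constructor
        · simpa [hz0] using tendsto_pure_nhds z 0
        · have hev : (Faux gamma lam ((pmax - L) / (pmax - pmin)) pmax L r
              (Uaux (lam * ((L - R) / (pmax - pmin))) mu r R L))
              =ᶠ[nhdsWithin 0 (Set.Ioi 0)] z :=
            eventually_mem_nhdsWithin.mono fun T hT => (hzF T hT).symm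
          have hul := Uaux_tendsto_zero (lam * ((L - R) / (pmax - pmin))) mu r R L hmu hlam'
          have hFt := Faux_tendsto gamma lam ((pmax - L) / (pmax - pmin)) pmax L r
            (Uaux (lam * ((L - R) / (pmax - pmin))) mu r R L)
            (nhdsWithin 0 (Set.Ioi 0)) 1 1 0 he1zero he2zero hul
          exact Tendsto.congr' hev (by simpa using hFt)
      · have hFa : ContinuousAt (Faux gamma lam ((pmax - L) / (pmax - pmin)) pmax L r
            (Uaux (lam * ((L - R) / (pmax - pmin))) mu r R L)) t :=
          hFcont.continuousAt (Ioi_mem_nhds h)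
        have hev : (Faux gamma lam ((pmax - L) / (pmax - pmin)) pmax L r
            (Uaux (lam * ((L - R) / (pmax - pmin))) mu r R L)) =ᶠ[nhds t] z :=
          eventually_of_mem (Ioi_mem_nhds h) fun T hT => (hzF T hT).symm
        exact (hFa.congr hev).continuousWithinAt
    have htop : Tendsto z atTop (nhds 0) := by
      have hev : (Faux gamma lam ((pmax - L) / (pmax - pmin)) pmax L r
          (Uaux (lam * ((L - R) / (pmax - pmin))) mu r R L)) =ᶠ[atTop] z :=
        (eventually_gt_atTop 0).mono fun T hT => (hzF T hT).symm
      have hul := Uaux_tendsto_atTop (lam * ((L - R) / (pmax - pmin))) mu r R L hmu hlam' hr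
      have hFt := Faux_tendsto gamma lam ((pmax - L) / (pmax - pmin)) pmax L r
        (Uaux (lam * ((L - R) / (pmax - pmin))) mu r R L) atTop 0 0 0 he1top he2top hul
      exact Tendsto.congr' hev (by simpa using hFt)
    exact ⟨hcont, htop, exists_max_aux z hcont htop hz0⟩
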